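/- Let A be a normal N×N complex matrix with 0 < ‖A‖ < 1 and let B be a nonzero positive semidefinite N×N matrix. Define S(T) = ∑_{k=0}^{T} A^k B (A†)^k for an integer T ≥ 0 and S(∞) = ∑_{k=0}^{∞} A^k B (A†)^k. Then (1/2)·‖ S(∞)/tr(S(∞)) − S(T)/tr(S(T)) ‖₁ ≤ ‖A‖^{2(T+1)}. -/

import Mathlib

open scoped Matrix.Norms.L2Operator ComplexOrder
open Matrix

/-- The trace norm (sum of singular values) of a square complex matrix,
realized as `tr √(Mᴴ M)`. -/
noncomputable def traceNorm {n : ℕ} (M : Matrix (Fin n) (Fin n) ℂ) : ℝ :=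
  (((Matrix.posSemidef_conjTranspose_mul_self M).1.eigenvectorUnitary : Matrix (Fin n) (Fin n) ℂ) *
    diagonal (((↑) : ℝ → ℂ) ∘ (√·) ∘ (Matrix.posSemidef_conjTranspose_mul_self M).1.eigenvalues) *
    (star (Matrix.posSemidef_conjTranspose_mul_self M).1.eigenvectorUnitary : Matrix (Fin n) (Fin n) ℂ)).trace.re

namespace LyapAux

variable {n : ℕ}

section SqrtShim
open scoped MatrixOrder

noncomputable def _root_.Matrix.PosSemidef.sqrt {M : Matrix (Fin n) (Fin n) ℂ} (_hM : M.PosSemidef) :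
    Matrix (Fin n) (Fin n) ℂ := CFC.sqrt M

lemma _root_.Matrix.PosSemidef.posSemidef_sqrt {M : Matrix (Fin n) (Fin n) ℂ} (hM : M.PosSemidef) :
    hM.sqrt.PosSemidef := (CFC.sqrt_nonneg M).posSemidef

lemma _root_.Matrix.PosSemidef.sqrt_mul_self {M : Matrix (Fin n) (Fin n) ℂ} (hM : M.PosSemidef) :
    hM.sqrt * hM.sqrt = M := CFC.sqrt_mul_sqrt_self M hM.nonneg

lemma cfc_sqrt_eq {X C : Matrix (Fin n) (Fin n) ℂ} (hX : X.PosSemidef) (hC : C.PosSemidef)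
    (h : C ^ 2 = X) :
    C = (hX.1.eigenvectorUnitary : Matrix (Fin n) (Fin n) ℂ) *
      diagonal (((↑) : ℝ → ℂ) ∘ (√·) ∘ hX.1.eigenvalues) *
      (star hX.1.eigenvectorUnitary : Matrix (Fin n) (Fin n) ℂ) := by
  have e : CFC.sqrt X = C := (CFC.sqrt_eq_iff X C hX.nonneg hC.nonneg).mpr (by rw [← sq, h])
  rw [← e, CFC.sqrt_eq_real_sqrt X hX.nonneg, cfcₙ_eq_cfc, hX.1.cfc_eq]
  rfl

end SqrtShim


lemma hasSum_entry {f : ℕ → Matrix (Fin n) (Fin n) ℂ} {S : Matrix (Fin n) (Fin n) ℂ}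
    (h : HasSum f S) (i j : Fin n) : HasSum (fun k => f k i j) (S i j) := by
  let φ : Matrix (Fin n) (Fin n) ℂ →ₗ[ℂ] ℂ :=
    { toFun := fun M => M i j
      map_add' := fun _ _ => rfl
      map_smul' := fun _ _ => rfl }
  exact h.map φ φ.continuous_of_finiteDimensional

lemma hasSum_quad {f : ℕ → Matrix (Fin n) (Fin n) ℂ} {S : Matrix (Fin n) (Fin n) ℂ}
    (h : HasSum f S) (x : Fin n → ℂ) :
    HasSum (fun k => star x ⬝ᵥ (f k) *ᵥ x) (star x ⬝ᵥ S *ᵥ x) := by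
  let φ : Matrix (Fin n) (Fin n) ℂ →ₗ[ℂ] ℂ :=
    { toFun := fun M => star x ⬝ᵥ M *ᵥ x
      map_add' := fun M N => by simp [add_mulVec, dotProduct_add]
      map_smul' := fun c M => by simp [smul_mulVec, dotProduct_smul] }
  exact h.map φ φ.continuous_of_finiteDimensional

lemma hasSum_posSemidef {f : ℕ → Matrix (Fin n) (Fin n) ℂ} (hf : ∀ k, (f k).PosSemidef)
    {S : Matrix (Fin n) (Fin n) ℂ} (h : HasSum f S) : S.PosSemidef := by
  refine PosSemidef.of_dotProduct_mulVec_nonneg ?_ fun x => ?_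
  · ext i j
    rw [conjTranspose_apply]
    have h1 : HasSum (fun k => (starRingEnd ℂ) (f k j i)) ((starRingEnd ℂ) (S j i)) :=
      (hasSum_entry h j i).map (starRingEnd ℂ) continuous_star
    have h2 : (fun k => (starRingEnd ℂ) (f k j i)) = fun k => f k i j := by
      funext k
      rw [starRingEnd_apply]
      exact (hf k).1.apply i j
    rw [h2] at h1
    have h3 := h1.unique (hasSum_entry h i j)
    rw [starRingEnd_apply] at h3
    exact h3
  · have hq := hasSum_quad h x
    have hterm : ∀ k, 0 ≤ star x ⬝ᵥ (f k) *ᵥ x := fun k => (hf k).dotProduct_mulVec_nonneg x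
    rw [Complex.le_def]
    constructor
    · have hre := Complex.hasSum_re hq
      have := hasSum_le (fun k => (Complex.le_def.mp (hterm k)).1) hasSum_zero hre
      simpa using this
    · have him := Complex.hasSum_im hq
      have h0 : (fun k => (star x ⬝ᵥ (f k) *ᵥ x).im) = fun _ => (0:ℝ) := by
        funext k
        exact ((Complex.le_def.mp (hterm k)).2).symm
      rw [h0] at him
      simpa using (hasSum_zero.unique him)



lemma diag_nonneg {M : Matrix (Fin n) (Fin n) ℂ} (hM : M.PosSemidef) (i : Fin n) :
    0 ≤ M i i := by
  have h := hM.dotProduct_mulVec_nonneg (Pi.single i 1)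
  have e : star (Pi.single i 1 : Fin n → ℂ) ⬝ᵥ M *ᵥ (Pi.single i 1) = M i i := by
    simp [dotProduct, Matrix.mulVec, Pi.single_apply, apply_ite (star : ℂ → ℂ),
      mul_ite, ite_mul]
  rwa [e] at h

lemma trace_nonneg {M : Matrix (Fin n) (Fin n) ℂ} (hM : M.PosSemidef) : 0 ≤ M.trace :=
  Finset.sum_nonneg fun i _ => diag_nonneg hM i

lemma cx_eq_re {z : ℂ} (hz : 0 ≤ z) : z = (z.re : ℂ) := by
  have h := Complex.le_def.mp hz
  exact Complex.ext (by simp) (by simp [← h.2])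

lemma smul_psd {M : Matrix (Fin n) (Fin n) ℂ} (hM : M.PosSemidef) {c : ℝ} (hc : 0 ≤ c) :
    (((c : ℂ)) • M).PosSemidef := by
  refine PosSemidef.of_dotProduct_mulVec_nonneg ?_ fun x => ?_
  · show ((c:ℂ) • M)ᴴ = (c:ℂ) • M
    rw [conjTranspose_smul, Complex.star_def, Complex.conj_ofReal, hM.1]
  · rw [smul_mulVec, dotProduct_smul, smul_eq_mul]
    exact mul_nonneg (Complex.zero_le_real.mpr hc) (hM.dotProduct_mulVec_nonneg x)

lemma trace_mul_conjTranspose_re (X : Matrix (Fin n) (Fin n) ℂ) :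
    (X * Xᴴ).trace.re = ∑ i, ∑ j, ‖X i j‖ ^ 2 := by
  have h : (X * Xᴴ).trace = ((∑ i, ∑ j, ‖X i j‖ ^ 2 : ℝ) : ℂ) := by
    rw [Matrix.trace]
    push_cast
    refine Finset.sum_congr rfl fun i _ => ?_
    rw [Matrix.diag_apply, Matrix.mul_apply]
    refine Finset.sum_congr rfl fun j _ => ?_
    rw [conjTranspose_apply, Complex.star_def, Complex.mul_conj, Complex.normSq_eq_norm_sq]
    push_cast
    ring
  rw [h, Complex.ofReal_re]



lemma col_sq_norm_le (M C : Matrix (Fin n) (Fin n) ℂ) (j : Fin n) :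
    ∑ i, ‖(M * C) i j‖ ^ 2 ≤ ‖M‖ ^ 2 * ∑ i, ‖C i j‖ ^ 2 := by
  set x : EuclideanSpace ℂ (Fin n) := (WithLp.equiv 2 (Fin n → ℂ)).symm (fun i => C i j) with hx
  have hb := M.l2_opNorm_mulVec x
  have h1 : ‖(EuclideanSpace.equiv (Fin n) ℂ).symm (M *ᵥ x)‖ ^ 2 = ∑ i, ‖(M * C) i j‖ ^ 2 := by
    rw [EuclideanSpace.norm_eq, Real.sq_sqrt (by positivity)]
    exact Finset.sum_congr rfl fun i _ => by congr 1
  have h2 : ‖x‖ ^ 2 = ∑ i, ‖C i j‖ ^ 2 := by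
    rw [EuclideanSpace.norm_eq, Real.sq_sqrt (by positivity)]
    exact Finset.sum_congr rfl fun i _ => rfl
  calc ∑ i, ‖(M * C) i j‖ ^ 2 = ‖(EuclideanSpace.equiv (Fin n) ℂ).symm (M *ᵥ x)‖ ^ 2 := h1.symm
    _ ≤ (‖M‖ * ‖x‖) ^ 2 := by
        apply pow_le_pow_left₀ (norm_nonneg _) hb
    _ = ‖M‖ ^ 2 * ‖x‖ ^ 2 := by ring
    _ = ‖M‖ ^ 2 * ∑ i, ‖C i j‖ ^ 2 := by rw [h2]



lemma trace_conj_le (M : Matrix (Fin n) (Fin n) ℂ) {S : Matrix (Fin n) (Fin n) ℂ}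
    (hS : S.PosSemidef) :
    (M * S * Mᴴ).trace.re ≤ ‖M‖ ^ 2 * S.trace.re := by
  classical
  set C := hS.sqrt with hC
  have hCh : Cᴴ = C := hS.posSemidef_sqrt.1
  have hCC : C * C = S := hS.sqrt_mul_self
  have h1 : M * S * Mᴴ = (M * C) * (M * C)ᴴ := by
    rw [conjTranspose_mul, hCh, ← hCC]
    simp only [Matrix.mul_assoc]
  have h2 : S.trace.re = ∑ j, ∑ i, ‖C i j‖ ^ 2 := by
    have : S = C * Cᴴ := by rw [hCh, hCC]
    rw [this, trace_mul_conjTranspose_re]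
    exact Finset.sum_comm
  have h3 : (M * S * Mᴴ).trace.re = ∑ j, ∑ i, ‖(M * C) i j‖ ^ 2 := by
    rw [h1, trace_mul_conjTranspose_re]
    exact Finset.sum_comm
  rw [h2, h3, Finset.mul_sum]
  exact Finset.sum_le_sum fun j _ => col_sq_norm_le M C j

lemma traceNorm_eq_sum_abs {D : Matrix (Fin n) (Fin n) ℂ} (hD : D.IsHermitian) :
    traceNorm D = ∑ i, |hD.eigenvalues i| := by
  classical
  set U : Matrix (Fin n) (Fin n) ℂ := (hD.eigenvectorUnitary : Matrix (Fin n) (Fin n) ℂ) with hUdef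
  set μ := hD.eigenvalues with hμ
  have hU1 : U * star U = 1 := Unitary.mul_star_self_of_mem hD.eigenvectorUnitary.2
  have hU2 : star U * U = 1 := Unitary.star_mul_self_of_mem hD.eigenvectorUnitary.2
  set dg : Matrix (Fin n) (Fin n) ℂ := diagonal (fun i => ((|μ i| : ℝ) : ℂ)) with hdg
  set C : Matrix (Fin n) (Fin n) ℂ := U * dg * star U with hCdef
  have hCps : C.PosSemidef := by
    have hd : dg.PosSemidef :=
      posSemidef_diagonal_iff.mpr fun i => Complex.zero_le_real.mpr (abs_nonneg _)
    have := hd.mul_mul_conjTranspose_same U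
    rwa [← star_eq_conjTranspose] at this
  have hsq : C ^ 2 = Dᴴ * D := by
    have hspec := hD.spectral_theorem
    rw [Unitary.conjStarAlgAut_apply] at hspec
    have e1 : C ^ 2 = U * (dg * dg) * star U := by
      rw [pow_two, hCdef]
      calc U * dg * star U * (U * dg * star U)
          = U * dg * ((star U * U) * (dg * star U)) := by simp only [Matrix.mul_assoc]
        _ = U * (dg * dg) * star U := by rw [hU2, Matrix.one_mul]; simp only [Matrix.mul_assoc]
    have e2 : Dᴴ * D =
        U * (diagonal (RCLike.ofReal ∘ μ) * diagonal (RCLike.ofReal ∘ μ)) * star U := by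
      have ha : Dᴴ * D = D * D := by rw [show Dᴴ = D from hD]
      have hb : D * D =
          (U * diagonal (RCLike.ofReal ∘ μ) * star U) *
          (U * diagonal (RCLike.ofReal ∘ μ) * star U) := congrArg₂ HMul.hMul hspec hspec
      rw [ha, hb]
      calc U * diagonal (RCLike.ofReal ∘ μ) * star U *
            (U * diagonal (RCLike.ofReal ∘ μ) * star U)
          = U * diagonal (RCLike.ofReal ∘ μ) *
              ((star U * U) * (diagonal (RCLike.ofReal ∘ μ) * star U)) := by
            simp only [Matrix.mul_assoc]
        _ = _ := by rw [hU2, Matrix.one_mul]; simp only [Matrix.mul_assoc]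
    rw [e1, e2]
    congr 2
    rw [diagonal_mul_diagonal, diagonal_mul_diagonal]
    refine congrArg diagonal (funext fun i => ?_)
    show ((|μ i| : ℝ) : ℂ) * ((|μ i| : ℝ) : ℂ) = ((μ i : ℝ) : ℂ) * ((μ i : ℝ) : ℂ)
    rw [← Complex.ofReal_mul, ← Complex.ofReal_mul, abs_mul_abs_self]
  have hCsqrt := cfc_sqrt_eq (Matrix.posSemidef_conjTranspose_mul_self D) hCps hsq
  rw [traceNorm, ← hCsqrt, hCdef, Matrix.trace_mul_cycle, hU2, Matrix.one_mul, hdg,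
    trace_diagonal, ← Complex.ofReal_sum, Complex.ofReal_re]

lemma half_traceNorm_le {D P : Matrix (Fin n) (Fin n) ℂ} (hD : D.IsHermitian)
    (htr : D.trace = 0) (hP : P.PosSemidef) (hPD : (P - D).PosSemidef) :
    traceNorm D ≤ 2 * P.trace.re := by
  rw [traceNorm_eq_sum_abs hD]
  classical
  set U : Matrix (Fin n) (Fin n) ℂ := (hD.eigenvectorUnitary : Matrix (Fin n) (Fin n) ℂ) with hUdef
  set μ := hD.eigenvalues with hμ
  have hU1 : U * star U = 1 := Unitary.mul_star_self_of_mem hD.eigenvectorUnitary.2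
  have hU2 : star U * U = 1 := Unitary.star_mul_self_of_mem hD.eigenvectorUnitary.2
  have hdiag : star U * D * U = diagonal (RCLike.ofReal ∘ μ) := by
    have h := hD.conjStarAlgAut_star_eigenvectorUnitary
    rwa [Unitary.conjStarAlgAut_star_apply] at h
  set Q : Matrix (Fin n) (Fin n) ℂ := star U * P * U with hQ
  have hsU : (star U)ᴴ = U := by rw [← star_eq_conjTranspose, star_star]
  have hQps : Q.PosSemidef := by
    have := hP.mul_mul_conjTranspose_same (star U)
    rwa [hsU] at this
  have hQD : (Q - diagonal (RCLike.ofReal ∘ μ)).PosSemidef := by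
    have h := hPD.mul_mul_conjTranspose_same (star U)
    rwa [hsU, Matrix.mul_sub, Matrix.sub_mul, hdiag] at h
  have hkey : ∀ i, |μ i| ≤ 2 * (Q i i).re - μ i := by
    intro i
    have h1 := diag_nonneg hQD i
    have h2 := diag_nonneg hQps i
    rw [Matrix.sub_apply, diagonal_apply_eq] at h1
    have h1' := (Complex.le_def.mp h1).1
    have h2' := (Complex.le_def.mp h2).1
    simp only [Complex.zero_re, Complex.sub_re, Function.comp_apply, Complex.ofReal_re] at h1' h2'
    have hre : (RCLike.ofReal (μ i) : ℂ).re = μ i := by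
      simp [RCLike.ofReal]
    rw [hre] at h1'
    rw [abs_le]
    constructor <;> linarith
  have hμsum : ∑ i, μ i = 0 := by
    have ht : trace (diagonal (RCLike.ofReal ∘ μ)) = D.trace := by
      rw [← hdiag, Matrix.trace_mul_cycle, hU1, Matrix.one_mul]
    rw [htr, trace_diagonal] at ht
    have : ((∑ i, μ i : ℝ) : ℂ) = 0 := by
      rw [Complex.ofReal_sum]
      rw [← ht]
      exact Finset.sum_congr rfl fun i _ => by simp [RCLike.ofReal]
    exact_mod_cast this
  have hQtr : ∑ i, (Q i i).re = P.trace.re := by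
    have : Q.trace = P.trace := by
      rw [hQ, Matrix.trace_mul_cycle, hU1, Matrix.one_mul]
    rw [← this, Matrix.trace]
    simp [Complex.re_sum, Matrix.diag_apply]
  calc ∑ i, |μ i| ≤ ∑ i, (2 * (Q i i).re - μ i) := Finset.sum_le_sum fun i _ => hkey i
    _ = 2 * P.trace.re := by
        rw [Finset.sum_sub_distrib, hμsum, sub_zero, ← Finset.mul_sum, hQtr]


end LyapAux

open LyapAux

/-- Truncation error bound for the discrete-time Lyapunov series. -/
theorem discrete_lyapunov_truncation_bound {n : ℕ} (A B Sinf : Matrix (Fin n) (Fin n) ℂ)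
    (hA0 : 0 < ‖A‖) (hA1 : ‖A‖ < 1) (hnormal : A * Aᴴ = Aᴴ * A)
    (hB : B.PosSemidef) (hB0 : B ≠ 0)
    (hS : HasSum (fun k : ℕ => A ^ k * B * Aᴴ ^ k) Sinf) (T : ℕ) :
    (1/2) * traceNorm
      (Sinf.trace⁻¹ • Sinf -
        (∑ k ∈ Finset.range (T+1), A ^ k * B * Aᴴ ^ k).trace⁻¹ •
          (∑ k ∈ Finset.range (T+1), A ^ k * B * Aᴴ ^ k)) ≤ ‖A‖ ^ (2*(T+1)) := by
  classical
  set f : ℕ → Matrix (Fin n) (Fin n) ℂ := fun k => A ^ k * B * Aᴴ ^ k with hfdef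
  have hfpsd : ∀ k, (f k).PosSemidef := fun k => by
    have h := hB.mul_mul_conjTranspose_same (A ^ k)
    rw [conjTranspose_pow] at h
    exact h
  set ST : Matrix (Fin n) (Fin n) ℂ := ∑ k ∈ Finset.range (T+1), f k with hSTdef
  have hSTpsd : ST.PosSemidef :=
    Finset.sum_induction f _ (fun a b ha hb => ha.add hb) Matrix.PosSemidef.zero
      (fun k _ => hfpsd k)
  have hSinfpsd : Sinf.PosSemidef := hasSum_posSemidef hfpsd hS
  set M : Matrix (Fin n) (Fin n) ℂ := A ^ (T+1) with hMdef
  have htail : Sinf - ST = M * Sinf * Mᴴ := by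
    have h1 : HasSum (fun k => f (k + (T+1))) (Sinf - ST) := by
      refine (hasSum_nat_add_iff (T+1)).mpr ?_
      simpa [hSTdef] using hS
    have h2 : HasSum (fun k => M * f k * Mᴴ) (M * Sinf * Mᴴ) := by
      let φ : Matrix (Fin n) (Fin n) ℂ →ₗ[ℂ] Matrix (Fin n) (Fin n) ℂ :=
        { toFun := fun X => M * X * Mᴴ
          map_add' := fun X Y => by simp [Matrix.mul_add, Matrix.add_mul]
          map_smul' := fun c X => by simp [Matrix.mul_smul, Matrix.smul_mul] }
      exact hS.map φ φ.continuous_of_finiteDimensional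
    have heq : (fun k => f (k + (T+1))) = fun k => M * f k * Mᴴ := by
      funext k
      show A ^ (k + (T+1)) * B * Aᴴ ^ (k + (T+1)) = M * (A ^ k * B * Aᴴ ^ k) * Mᴴ
      have e1 : A ^ (k + (T+1)) = A ^ (T+1) * A ^ k := by rw [add_comm, pow_add]
      have e2 : Aᴴ ^ (k + (T+1)) = Aᴴ ^ k * Aᴴ ^ (T+1) := pow_add _ _ _
      rw [e1, e2, hMdef, conjTranspose_pow]
      simp only [Matrix.mul_assoc]
    rw [heq] at h1
    exact h1.unique h2
  have hRpsd : (Sinf - ST).PosSemidef := by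
    rw [htail]; exact hSinfpsd.mul_mul_conjTranspose_same M
  set s : ℝ := Sinf.trace.re with hs
  set t : ℝ := ST.trace.re with ht
  have hs_eq : Sinf.trace = (s : ℂ) := cx_eq_re (trace_nonneg hSinfpsd)
  have ht_eq : ST.trace = (t : ℂ) := cx_eq_re (trace_nonneg hSTpsd)
  have hsub_re : (Sinf - ST).trace.re = s - t := by rw [Matrix.trace_sub, Complex.sub_re]
  have hst : t ≤ s := by
    have h0 := (Complex.le_def.mp (trace_nonneg hRpsd)).1
    rw [hsub_re] at h0
    simp only [Complex.zero_re] at h0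
    linarith
  have ht0 : 0 < t := by
    have hBtr : 0 < B.trace.re := by
      have h0 : 0 ≤ B.trace.re := by
        have := (Complex.le_def.mp (trace_nonneg hB)).1
        simpa using this
      rcases h0.lt_or_eq with h | h
      · exact h
      · exfalso
        apply hB0
        have hCh : (hB.sqrt)ᴴ = hB.sqrt := hB.posSemidef_sqrt.1
        have hBe : B = hB.sqrt * (hB.sqrt)ᴴ := by rw [hCh, hB.sqrt_mul_self]
        have hF : B.trace.re = ∑ i, ∑ j, ‖hB.sqrt i j‖ ^ 2 := by
          have hc := congrArg (fun X : Matrix (Fin n) (Fin n) ℂ => X.trace.re) hBe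
          rw [trace_mul_conjTranspose_re] at hc
          exact hc
        have hsq0 : hB.sqrt = 0 := by
          have hzero : ∑ i, ∑ j, ‖hB.sqrt i j‖ ^ 2 = 0 := by rw [← hF, ← h]
          ext i j
          have h1 : ∀ i ∈ (Finset.univ : Finset (Fin n)),
              0 ≤ ∑ j, ‖hB.sqrt i j‖ ^ 2 := fun i _ => by positivity
          have h2 := (Finset.sum_eq_zero_iff_of_nonneg h1).mp hzero i (Finset.mem_univ i)
          have h3 : ∀ j ∈ (Finset.univ : Finset (Fin n)),
              0 ≤ ‖hB.sqrt i j‖ ^ 2 := fun j _ => by positivity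
          have h4 := (Finset.sum_eq_zero_iff_of_nonneg h3).mp h2 j (Finset.mem_univ j)
          simpa using h4
        rw [hBe, hsq0]
        simp
    have htsum : t = ∑ k ∈ Finset.range (T+1), ((f k).trace.re) := by
      rw [ht, hSTdef, Matrix.trace_sum, Complex.re_sum]
    rw [htsum]
    refine Finset.sum_pos' (fun k _ => ?_) ⟨0, Finset.mem_range.mpr (Nat.succ_pos T), ?_⟩
    · have := (Complex.le_def.mp (trace_nonneg (hfpsd k))).1
      simpa using this
    · have hf0 : f 0 = B := by simp [hfdef]
      rw [hf0]
      exact hBtr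
  have hs0 : 0 < s := lt_of_lt_of_le ht0 hst
  have hnormM : ‖M‖ ^ 2 ≤ ‖A‖ ^ (2*(T+1)) := by
    have h1 : ‖M‖ ≤ ‖A‖ ^ (T+1) := norm_pow_le' A (Nat.succ_pos T)
    calc ‖M‖ ^ 2 ≤ (‖A‖ ^ (T+1)) ^ 2 := pow_le_pow_left₀ (norm_nonneg _) h1 2
      _ = ‖A‖ ^ (2*(T+1)) := by rw [← pow_mul]; congr 1; ring
  have htail_tr : s - t ≤ ‖A‖ ^ (2*(T+1)) * s := by
    have h6 := trace_conj_le M hSinfpsd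
    rw [← htail, hsub_re] at h6
    calc s - t ≤ ‖M‖ ^ 2 * s := h6
      _ ≤ ‖A‖ ^ (2*(T+1)) * s := mul_le_mul_of_nonneg_right hnormM hs0.le
  have hsC : Sinf.trace⁻¹ = ((s⁻¹ : ℝ) : ℂ) := by rw [hs_eq, Complex.ofReal_inv]
  have htC : ST.trace⁻¹ = ((t⁻¹ : ℝ) : ℂ) := by rw [ht_eq, Complex.ofReal_inv]
  set D : Matrix (Fin n) (Fin n) ℂ := Sinf.trace⁻¹ • Sinf - ST.trace⁻¹ • ST with hDdef
  set P : Matrix (Fin n) (Fin n) ℂ := ((s⁻¹ : ℝ) : ℂ) • (Sinf - ST) with hPdef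
  have hPps : P.PosSemidef := smul_psd hRpsd (inv_nonneg.mpr hs0.le)
  have hDD : D = ((s⁻¹ : ℝ) : ℂ) • Sinf - ((t⁻¹ : ℝ) : ℂ) • ST := by
    rw [hDdef, hsC, htC]
  have hDherm : D.IsHermitian := by
    rw [hDD]
    exact ((smul_psd hSinfpsd (inv_nonneg.mpr hs0.le)).1).sub
      ((smul_psd hSTpsd (inv_nonneg.mpr ht0.le)).1)
  have hDtr : D.trace = 0 := by
    rw [hDD, Matrix.trace_sub, Matrix.trace_smul, Matrix.trace_smul, hs_eq, ht_eq,
      smul_eq_mul, smul_eq_mul, ← Complex.ofReal_mul, ← Complex.ofReal_mul,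
      inv_mul_cancel₀ hs0.ne', inv_mul_cancel₀ ht0.ne']
    simp
  have hPD : (P - D).PosSemidef := by
    have e : P - D = ((t⁻¹ - s⁻¹ : ℝ) : ℂ) • ST := by
      rw [hPdef, hDD, smul_sub, Complex.ofReal_sub, sub_smul]
      abel
    rw [e]
    refine smul_psd hSTpsd ?_
    rw [sub_nonneg]
    exact inv_anti₀ ht0 hst
  have hPtr : P.trace.re = s⁻¹ * (s - t) := by
    rw [hPdef, Matrix.trace_smul, Matrix.trace_sub, hs_eq, ht_eq, smul_eq_mul,
      ← Complex.ofReal_sub, ← Complex.ofReal_mul, Complex.ofReal_re]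
  have hmain := half_traceNorm_le hDherm hDtr hPps hPD
  have hfin : s⁻¹ * (s - t) ≤ ‖A‖ ^ (2*(T+1)) := by
    rw [inv_mul_le_iff₀ hs0]
    calc s - t ≤ ‖A‖ ^ (2*(T+1)) * s := htail_tr
      _ = s * ‖A‖ ^ (2*(T+1)) := by ring
  calc (1/2) * traceNorm D ≤ (1/2) * (2 * P.trace.re) := by
        apply mul_le_mul_of_nonneg_left hmain (by norm_num)
    _ = P.trace.re := by ring
    _ = s⁻¹ * (s - t) := hPtr
    _ ≤ ‖A‖ ^ (2*(T+1)) := hfin
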